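/- Let k = ℤ/3ℤ and work in the polynomial ring k[x,y]. For every q = 3^e with integer e ≥ 1, the polynomial (x² − y²)^q = x^{2q} − y^{2q} does not belong to the ideal of k[x,y] generated by x^q(x² − y²) and y^q(x² − y²); equivalently, the polynomial Σ_{j=0}^{q−1} x^{2j} y^{2(q−1−j)} does not belong to the ideal (x^q, y^q). -/

import Mathlib

open MvPolynomial Finset

/-- In `k[x,y]` with `k = ℤ/3ℤ` (here `x = X 0`, `y = X 1`), for every
`q = 3^e` with `e ≥ 1`: `(x² − y²)^q = x^{2q} − y^{2q}`, this polynomial does not belong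
to the ideal generated by `x^q(x² − y²)` and `y^q(x² − y²)` (the ideal `𝔪^{[q]}·I` for
`𝔪 = (x,y)`, `I = (x² − y²)`); equivalently, `∑_{j=0}^{q−1} x^{2j} y^{2(q−1−j)}` does not
belong to the ideal `(x^q, y^q)`. -/
theorem pow_not_mem_bracketPow_mul {e : ℕ} (he : 1 ≤ e) (q : ℕ) (hq : q = 3 ^ e) :
    ((X 0 ^ 2 - X 1 ^ 2 : MvPolynomial (Fin 2) (ZMod 3)) ^ q
        = X 0 ^ (2 * q) - X 1 ^ (2 * q))
      ∧ (X 0 ^ 2 - X 1 ^ 2 : MvPolynomial (Fin 2) (ZMod 3)) ^ q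
          ∉ Ideal.span ({X 0 ^ q * (X 0 ^ 2 - X 1 ^ 2), X 1 ^ q * (X 0 ^ 2 - X 1 ^ 2)} :
              Set (MvPolynomial (Fin 2) (ZMod 3)))
      ∧ (∑ j ∈ range q, (X 0 : MvPolynomial (Fin 2) (ZMod 3)) ^ (2 * j)
            * X 1 ^ (2 * (q - 1 - j)))
          ∉ Ideal.span ({X 0 ^ q, X 1 ^ q} : Set (MvPolynomial (Fin 2) (ZMod 3))) := by
  have hfact : Fact (Nat.Prime 3) := ⟨by norm_num⟩
  -- Frobenius identity
  have hfrob : (X 0 ^ 2 - X 1 ^ 2 : MvPolynomial (Fin 2) (ZMod 3)) ^ q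
      = X 0 ^ (2 * q) - X 1 ^ (2 * q) := by
    subst hq
    rw [sub_pow_char_pow (p := 3), ← pow_mul, ← pow_mul]
  -- the geometric sum
  set S : MvPolynomial (Fin 2) (ZMod 3) :=
    ∑ j ∈ range q, (X 0 : MvPolynomial (Fin 2) (ZMod 3)) ^ (2 * j) * X 1 ^ (2 * (q - 1 - j))
    with hSdef
  have hS : S * (X 0 ^ 2 - X 1 ^ 2) = X 0 ^ (2 * q) - X 1 ^ (2 * q) := by
    have h := geom_sum₂_mul ((X 0 : MvPolynomial (Fin 2) (ZMod 3)) ^ 2) (X 1 ^ 2) q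
    rw [← pow_mul, ← pow_mul] at h
    rw [hSdef, ← h]
    refine congrArg (· * (X 0 ^ 2 - X 1 ^ 2)) ?_
    refine Finset.sum_congr rfl fun j hj => ?_
    rw [← pow_mul, ← pow_mul]
  -- q - 1 is even
  have hq1 : 1 ≤ q := by subst hq; exact Nat.one_le_pow _ _ (by norm_num)
  have hodd : Odd q := by subst hq; exact Odd.pow ⟨1, by norm_num⟩
  obtain ⟨m, hm⟩ : ∃ m, q - 1 = 2 * m := by
    obtain ⟨t, ht⟩ := hodd
    exact ⟨t, by omega⟩
  -- key coefficient computations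
  set d : Fin 2 →₀ ℕ := Finsupp.single 0 (q - 1) + Finsupp.single 1 (q - 1) with hd
  have hd0 : d 0 = q - 1 := by simp [hd, Finsupp.single_apply]
  have hd1 : d 1 = q - 1 := by simp [hd, Finsupp.single_apply]
  -- key: S ∉ (x^q, y^q)
  have key : S ∉ Ideal.span ({X 0 ^ q, X 1 ^ q} : Set (MvPolynomial (Fin 2) (ZMod 3))) := by
    intro hmem
    rw [Ideal.mem_span_pair] at hmem
    obtain ⟨a, b, hab⟩ := hmem
    have hcS : coeff d S = 1 := by
      rw [hSdef]
      rw [coeff_sum]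
      have hterm : ∀ j ∈ range q,
          coeff d ((X 0 : MvPolynomial (Fin 2) (ZMod 3)) ^ (2 * j) * X 1 ^ (2 * (q - 1 - j)))
            = if j = m then 1 else 0 := by
        intro j hj
        rw [X_pow_eq_monomial, X_pow_eq_monomial, monomial_mul, coeff_monomial]
        split_ifs with h1 h2 h2
        · simp
        · exfalso; apply h2
          have := DFunLike.congr_fun h1 0
          simp [Finsupp.single_apply, hd] at this
          omega
        · exfalso; apply h1
          subst h2
          have h3 : q - 1 - j = j := by omega
          have h4 : 2 * j = q - 1 := by omega
          rw [h3, h4]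
        · rfl
      rw [Finset.sum_congr rfl hterm, Finset.sum_ite_eq' (range q) m (fun _ => (1 : ZMod 3))]
      have : m ∈ range q := by
        rw [Finset.mem_range]; omega
      simp [this]
    have hca : coeff d (a * X 0 ^ q) = 0 := by
      rw [X_pow_eq_monomial, coeff_mul_monomial']
      have : ¬ Finsupp.single (0 : Fin 2) q ≤ d := by
        intro h
        have := h 0
        simp [Finsupp.single_apply, hd] at this
        omega
      simp [this]
    have hcb : coeff d (b * X 1 ^ q) = 0 := by
      rw [X_pow_eq_monomial, coeff_mul_monomial']
      have : ¬ Finsupp.single (1 : Fin 2) q ≤ d := by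
        intro h
        have := h 1
        simp [Finsupp.single_apply, hd] at this
        omega
      simp [this]
    have : coeff d S = 0 := by
      rw [← hab, coeff_add, hca, hcb, add_zero]
    rw [hcS] at this
    exact one_ne_zero this
  refine ⟨hfrob, ?_, key⟩
  -- middle claim
  intro hmem
  rw [Ideal.mem_span_pair] at hmem
  obtain ⟨a, b, hab⟩ := hmem
  have hne : (X 0 ^ 2 - X 1 ^ 2 : MvPolynomial (Fin 2) (ZMod 3)) ≠ 0 := by
    intro h0
    have := congrArg (eval (fun i : Fin 2 => if i = 0 then (1 : ZMod 3) else 0)) h0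
    simp at this
  have hcancel : (a * X 0 ^ q + b * X 1 ^ q) * (X 0 ^ 2 - X 1 ^ 2)
      = S * (X 0 ^ 2 - X 1 ^ 2) := by
    rw [hS, ← hfrob, ← hab]; ring
  have hSeq : a * X 0 ^ q + b * X 1 ^ q = S := mul_right_cancel₀ hne hcancel
  exact key (hSeq ▸ Ideal.mem_span_pair.mpr ⟨a, b, rfl⟩)
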